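/- Let t ≥ 1 and 2 ≤ ω ≤ t be integers, and let G be a finite simple graph of treewidth at most t whose largest clique has at most ω vertices. Then G admits a proper t-fold coloring with t² + ω − 1 colors; that is, there is an assignment γ of a set of exactly t colors from {1, …, t² + ω − 1} to each vertex of G such that γ(u) ∩ γ(v) = ∅ for every edge uv of G. -/

import Mathlib

open MeasureTheory ENNReal

/-- `H` (a graph on vertex set `Fin n`) is a `t`-tree, witnessed by the natural ordering of
`Fin n`: the first `t` vertices form a clique, and every later vertex has a backward
neighborhood that is a clique on exactly `t` vertices. -/
def IsTTree (t n : ℕ) (H : SimpleGraph (Fin n)) : Prop :=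
  t ≤ n ∧
  (∀ i j : Fin n, (i : ℕ) < t → (j : ℕ) < t → i ≠ j → H.Adj i j) ∧
  ∀ i : Fin n, t ≤ (i : ℕ) →
    H.IsClique {j : Fin n | j < i ∧ H.Adj i j} ∧ {j : Fin n | j < i ∧ H.Adj i j}.ncard = t

/-- `G` has treewidth at most `t`, i.e. `G` is a partial `t`-tree: a subgraph of some `t`-tree. -/
def TreewidthAtMost {V : Type} (G : SimpleGraph V) (t : ℕ) : Prop :=
  ∃ (n : ℕ) (H : SimpleGraph (Fin n)) (f : V → Fin n),
    IsTTree t n H ∧ Function.Injective f ∧ ∀ u v : V, G.Adj u v → H.Adj (f u) (f v)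

/-- A fractional coloring of `G`: each vertex gets a measurable subset of `ℝ` of Lebesgue
measure `1`, with adjacent vertices receiving disjoint sets. -/
def IsFracColoring {V : Type} (G : SimpleGraph V) (φ : V → Set ℝ) : Prop :=
  (∀ v, MeasurableSet (φ v)) ∧ (∀ v, volume (φ v) = 1) ∧
  ∀ u v : V, G.Adj u v → φ u ∩ φ v = ∅

/-- The fractional chromatic number of `G`: the infimum over all fractional colorings of the
Lebesgue measure of the union of all color sets. -/
noncomputable def fracChromNum {V : Type} (G : SimpleGraph V) : ℝ≥0∞ :=
  ⨅ (φ : V → Set ℝ) (_ : IsFracColoring G φ), volume (⋃ v : V, φ v)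

/-- The invariant maintained by the greedy `t`-fold coloring of the first `i` vertices of a
partial `t`-tree. -/
def TFoldInv (t N : ℕ) {n : ℕ} (H : SimpleGraph (Fin n)) (R : Fin n → Fin n → Prop)
    (i : ℕ) (γ : Fin n → Finset ℕ) : Prop :=
  (∀ j : Fin n, (j : ℕ) < i → γ j ⊆ Finset.Icc 1 N ∧ (γ j).card = t) ∧
  (∀ j k : Fin n, (j : ℕ) < i → (k : ℕ) < i → H.Adj j k →
    (γ j ∩ γ k).card ≤ 1 ∧ (R j k → γ j ∩ γ k = ∅)) ∧
  (∀ L : Finset (Fin n), (∀ x ∈ L, (x : ℕ) < i) → H.IsClique (L : Set (Fin n)) →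
    L.card ≤ t → ∀ μ : ℕ, (∀ S ⊆ L, (∀ x ∈ S, ∀ y ∈ S, x ≠ y → R x y) → S.card ≤ μ) →
    (L.biUnion γ).card ≤ L.card * (t - 1) + μ)

lemma tfold_step (t ω N : ℕ) (ht2 : 2 ≤ t) (hω2 : 2 ≤ ω) (hωt : ω ≤ t)
    (hN : N = t * t + ω - 1) {n : ℕ} (H : SimpleGraph (Fin n)) (hT : IsTTree t n H)
    (R : Fin n → Fin n → Prop) (hRs : ∀ x y, R x y → R y x)
    (hRH : ∀ x y, R x y → H.Adj x y)
    (hRfree : ∀ S : Finset (Fin n), (∀ x ∈ S, ∀ y ∈ S, x ≠ y → R x y) → S.card ≤ ω)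
    (i : ℕ) (hin : i < n) (γ : Fin n → Finset ℕ) (hγ : TFoldInv t N H R i γ) :
    ∃ γ' : Fin n → Finset ℕ, TFoldInv t N H R (i + 1) γ' := by
  classical
  obtain ⟨hC0, hC1, hC2⟩ := hγ
  set v : Fin n := ⟨i, hin⟩ with hv
  have hvval : (v : ℕ) = i := rfl
  set K : Finset (Fin n) := Finset.univ.filter (fun j => j < v ∧ H.Adj v j) with hK
  have hKmem : ∀ j, j ∈ K ↔ (j < v ∧ H.Adj v j) := by
    intro j; simp [hK]
  have hKset : {j : Fin n | j < v ∧ H.Adj v j} = (K : Set (Fin n)) := by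
    ext j; simp [hK]
  have hKlt : ∀ j ∈ K, (j : ℕ) < i := fun j hj => ((hKmem j).1 hj).1
  have hKv : v ∉ K := fun h => absurd ((hKmem v).1 h).1 (lt_irrefl v)
  obtain ⟨htn, hinit, hback⟩ := hT
  -- `K` is a clique
  have hKclique : H.IsClique (K : Set (Fin n)) := by
    by_cases hti : t ≤ i
    · have := (hback v (by simpa [hvval] using hti)).1
      rwa [hKset] at this
    · intro x hx y hy hxy
      have hx' := hKlt x hx
      have hy' := hKlt y hy
      exact hinit x y (by omega) (by omega) hxy
  have hKcard_le : K.card ≤ t := by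
    by_cases hti : t ≤ i
    · have := (hback v (by simpa [hvval] using hti)).2
      rw [hKset, Set.ncard_coe_finset] at this
      omega
    · have : K.card ≤ (Finset.range i).card :=
        Finset.card_le_card_of_injOn (fun j => (j : ℕ))
          (fun j hj => by simpa using hKlt j hj)
          (fun a _ b _ h => Fin.val_injective h)
      simp at this; omega
  have hKcard_eq : t ≤ i → K.card = t := by
    intro hti
    have := (hback v (by simpa [hvval] using hti)).2
    rwa [hKset, Set.ncard_coe_finset] at this
  -- every earlier `R`-neighbor of `v` lies in `K`
  have hRK : ∀ j : Fin n, (j : ℕ) < i → R v j → j ∈ K := by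
    intro j hj hR
    exact (hKmem j).2 ⟨by rw [Fin.lt_def]; omega, hRH _ _ hR⟩
  set A : Finset (Fin n) := K.filter (fun j => R v j) with hA
  set B : Finset (Fin n) := K \ A with hB
  have hAK : A ⊆ K := Finset.filter_subset _ _
  have hBK : B ⊆ K := Finset.sdiff_subset
  have hmemA : ∀ j, j ∈ A ↔ j ∈ K ∧ R v j := by intro j; simp [hA]
  have hmemB : ∀ j, j ∈ B ↔ j ∈ K ∧ ¬ R v j := by
    intro j; simp [hB, hA]; tauto
  have hBcard : B.card ≤ t := le_trans (Finset.card_le_card hBK) hKcard_le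
  -- choose a private color for each vertex of `B`
  have hpriv : ∀ b : Fin n, ∃ x : ℕ, b ∈ B → (x ∈ γ b ∧ ∀ w ∈ K, w ≠ b → x ∉ γ w) := by
    intro b
    by_cases hb : b ∈ B
    · have hbK := hBK hb
      by_contra hcon
      push_neg at hcon
      have hsub : γ b ⊆ (K.erase b).biUnion (fun w => γ b ∩ γ w) := by
        intro x hx
        obtain ⟨w, hw, hwb, hxw⟩ := (hcon x).2 hx
        exact Finset.mem_biUnion.2 ⟨w, Finset.mem_erase.2 ⟨hwb, hw⟩,
          Finset.mem_inter.2 ⟨hx, hxw⟩⟩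
      have hcard : ((K.erase b).biUnion (fun w => γ b ∩ γ w)).card ≤ (K.erase b).card * 1 := by
        apply Finset.card_biUnion_le_card_mul
        intro w hw
        obtain ⟨hwb, hwK⟩ := Finset.mem_erase.1 hw
        have hadj : H.Adj b w := hKclique (by exact_mod_cast hbK) (by exact_mod_cast hwK)
          (fun h => hwb (h.symm ▸ rfl))
        exact (hC1 b w (hKlt b hbK) (hKlt w hwK) hadj).1
      have h1 : (K.erase b).card = K.card - 1 := Finset.card_erase_of_mem hbK
      have h2 : (γ b).card = t := (hC0 b (hKlt b hbK)).2
      have h3 : (γ b).card ≤ (K.erase b).card * 1 := le_trans (Finset.card_le_card hsub) hcard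
      have h4 : K.card ≥ 1 := Finset.card_pos.2 ⟨b, hbK⟩
      omega
    · exact ⟨0, fun h => absurd h hb⟩
  choose xb hxb using hpriv
  have hxbγ : ∀ b ∈ B, xb b ∈ γ b := fun b hb => (hxb b hb).1
  have hxbpriv : ∀ b ∈ B, ∀ w ∈ K, w ≠ b → xb b ∉ γ w := fun b hb => (hxb b hb).2
  set X : Finset ℕ := B.image xb with hX
  have hXcard : X.card = B.card := by
    apply Finset.card_image_of_injOn
    intro b hb b' hb' heq
    by_contra hne
    have h1 := hxbγ b' hb'
    have h2 := hxbpriv b hb b' (hBK hb') (Ne.symm hne)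
    rw [heq] at h2
    exact h2 h1
  have hXmem : ∀ x ∈ X, ∃ b ∈ B, xb b = x := by
    intro x hx; simpa [hX] using hx
  -- the union of the colors used on `K`
  have hUK_sub : K.biUnion γ ⊆ Finset.Icc 1 N :=
    Finset.biUnion_subset.2 fun j hj => (hC0 j (hKlt j hj)).1
  -- main counting inequality: there is room for the fresh colors
  have key_ineq : (K.biUnion γ).card + (t - B.card) ≤ N := by
    by_cases hkt : K.card < t
    · have hU : (K.biUnion γ).card ≤ K.card * t :=
        Finset.card_biUnion_le_card_mul _ _ _
          (fun j hj => le_of_eq (hC0 j (hKlt j hj)).2)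
      have h1 : (K.card + 1) * t ≤ t * t := Nat.mul_le_mul_right t (by omega)
      rw [add_one_mul] at h1
      omega
    · have hk : K.card = t := by omega
      by_cases hBe : B = ∅
      · -- every vertex of `K` is an `R`-neighbor of `v`
        have hAeq : ∀ j ∈ K, R v j := by
          intro j hj
          by_contra h
          have : j ∈ B := (hmemB j).2 ⟨hj, h⟩
          simp [hBe] at this
        have hμ : ∀ S ⊆ K, (∀ x ∈ S, ∀ y ∈ S, x ≠ y → R x y) → S.card ≤ ω - 1 := by
          intro S hS hSpair
          have hvS : v ∉ S := fun h => hKv (hS h)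
          have : (insert v S).card ≤ ω := by
            apply hRfree
            intro x hx y hy hxy
            rcases Finset.mem_insert.1 hx with rfl | hx'
            · rcases Finset.mem_insert.1 hy with rfl | hy'
              · exact absurd rfl hxy
              · exact hAeq y (hS hy')
            · rcases Finset.mem_insert.1 hy with rfl | hy'
              · exact hRs _ _ (hAeq x (hS hx'))
              · exact hSpair x hx' y hy' hxy
          rw [Finset.card_insert_of_notMem hvS] at this
          omega
        have hU := hC2 K hKlt hKclique (le_of_eq hk) (ω - 1) hμ
        rw [hk] at hU
        have h1 : t * (t - 1) + t = t * t := by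
          cases t with
          | zero => omega
          | succ s => simp [Nat.succ_sub_one, Nat.mul_succ]
        omega
      · have hμ : ∀ S ⊆ K, (∀ x ∈ S, ∀ y ∈ S, x ≠ y → R x y) → S.card ≤ ω :=
          fun S _ hSpair => hRfree S hSpair
        have hU := hC2 K hKlt hKclique (le_of_eq hk) ω hμ
        rw [hk] at hU
        have hB1 : 1 ≤ B.card := Finset.card_pos.2 (Finset.nonempty_iff_ne_empty.2 hBe)
        have h1 : t * (t - 1) + t = t * t := by
          cases t with
          | zero => omega
          | succ s => simp [Nat.succ_sub_one, Nat.mul_succ]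
        omega
  -- choose the fresh colors
  have hroom : t - B.card ≤ (Finset.Icc 1 N \ K.biUnion γ).card := by
    have h1 : (Finset.Icc 1 N \ K.biUnion γ).card = N - (K.biUnion γ).card := by
      rw [Finset.card_sdiff_of_subset hUK_sub, Nat.card_Icc]
      omega
    have h2 : (K.biUnion γ).card ≤ N := by
      have h3 := Finset.card_le_card hUK_sub
      rw [Nat.card_Icc] at h3
      omega
    omega
  obtain ⟨F, hFsub, hFcard⟩ := Finset.exists_subset_card_eq hroom
  have hFicc : F ⊆ Finset.Icc 1 N := fun x hx => (Finset.mem_sdiff.1 (hFsub hx)).1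
  have hFnew : ∀ x ∈ F, ∀ j ∈ K, x ∉ γ j := by
    intro x hx j hj hxj
    exact (Finset.mem_sdiff.1 (hFsub hx)).2 (Finset.mem_biUnion.2 ⟨j, hj, hxj⟩)
  set P : Finset ℕ := X ∪ F with hP
  have hXicc : X ⊆ Finset.Icc 1 N := by
    intro x hx
    obtain ⟨b, hb, rfl⟩ := hXmem x hx
    exact (hC0 b (hKlt b (hBK hb))).1 (hxbγ b hb)
  have hPicc : P ⊆ Finset.Icc 1 N := Finset.union_subset hXicc hFicc
  have hXF : Disjoint X F := by
    rw [Finset.disjoint_left]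
    intro x hx hxF
    obtain ⟨b, hb, rfl⟩ := hXmem x hx
    exact hFnew _ hxF b (hBK hb) (hxbγ b hb)
  have hPcard : P.card = t := by
    rw [hP, Finset.card_union_of_disjoint hXF, hXcard, hFcard]
    omega
  -- key facts about the new palette
  have hPA : ∀ j ∈ A, P ∩ γ j = ∅ := by
    intro j hj
    rw [Finset.eq_empty_iff_forall_notMem]
    intro x hx
    obtain ⟨hxP, hxj⟩ := Finset.mem_inter.1 hx
    rcases Finset.mem_union.1 hxP with hxX | hxF
    · obtain ⟨b, hb, rfl⟩ := hXmem x hxX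
      have hne : j ≠ b := by
        intro h; subst h
        exact ((hmemB j).1 hb).2 (((hmemA j).1 hj).2)
      exact hxbpriv b hb j (hAK hj) hne hxj
    · exact hFnew x hxF j (hAK hj) hxj
  have hPB : ∀ b ∈ B, P ∩ γ b ⊆ {xb b} := by
    intro b hb x hx
    obtain ⟨hxP, hxb'⟩ := Finset.mem_inter.1 hx
    rcases Finset.mem_union.1 hxP with hxX | hxF
    · obtain ⟨b', hb', rfl⟩ := hXmem x hxX
      by_cases h : b' = b
      · subst h; exact Finset.mem_singleton_self _
      · exact absurd hxb' (hxbpriv b' hb' b (hBK hb) (Ne.symm h))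
    · exact absurd hxb' (hFnew x hxF b (hBK hb))
  have hPBx : ∀ b ∈ B, xb b ∈ P := by
    intro b hb
    exact Finset.mem_union_left _ (Finset.mem_image_of_mem _ hb)
  -- the updated coloring
  set γ' : Fin n → Finset ℕ := Function.update γ v P with hγ'
  have hγ'v : γ' v = P := Function.update_self v P γ
  have hγ'j : ∀ j : Fin n, (j : ℕ) < i → γ' j = γ j := by
    intro j hj
    apply Function.update_of_ne
    intro h
    rw [h, hvval] at hj
    omega
  refine ⟨γ', ?_, ?_, ?_⟩
  · -- C0
    intro j hj
    by_cases h : (j : ℕ) < i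
    · rw [hγ'j j h]; exact hC0 j h
    · have : j = v := Fin.ext (by omega)
      rw [this, hγ'v]
      exact ⟨hPicc, hPcard⟩
  · -- C1
    intro j k hj hk hadj
    by_cases hji : (j : ℕ) < i
    · by_cases hki : (k : ℕ) < i
      · rw [hγ'j j hji, hγ'j k hki]; exact hC1 j k hji hki hadj
      · -- k = v
        have hkv : k = v := Fin.ext (by omega)
        rw [hγ'j j hji, hkv, hγ'v]
        have hadj' : H.Adj v j := hkv ▸ hadj.symm
        have hjK : j ∈ K := (hKmem j).2 ⟨by rw [Fin.lt_def]; omega, hadj'⟩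
        by_cases hR : R v j
        · have hjA : j ∈ A := (hmemA j).2 ⟨hjK, hR⟩
          have he : P ∩ γ j = ∅ := hPA j hjA
          have he' : γ j ∩ P = ∅ := by rwa [Finset.inter_comm] at he
          exact ⟨by rw [he']; simp, fun _ => he'⟩
        · have hjB : j ∈ B := (hmemB j).2 ⟨hjK, hR⟩
          have hsub : γ j ∩ P ⊆ {xb j} := by
            rw [Finset.inter_comm]; exact hPB j hjB
          refine ⟨le_trans (Finset.card_le_card hsub) (by simp), fun hRjk => ?_⟩
          exact absurd (hRs _ _ (hkv ▸ hRjk)) hR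
    · have hjv : j = v := Fin.ext (by omega)
      by_cases hki : (k : ℕ) < i
      · rw [hγ'j k hki, hjv, hγ'v]
        have hadj' : H.Adj v k := hjv ▸ hadj
        have hkK : k ∈ K := (hKmem k).2 ⟨by rw [Fin.lt_def]; omega, hadj'⟩
        by_cases hR : R v k
        · have hkA : k ∈ A := (hmemA k).2 ⟨hkK, hR⟩
          have he : P ∩ γ k = ∅ := hPA k hkA
          exact ⟨by rw [he]; simp, fun _ => he⟩
        · have hkB : k ∈ B := (hmemB k).2 ⟨hkK, hR⟩
          exact ⟨le_trans (Finset.card_le_card (hPB k hkB)) (by simp),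
            fun hRjk => absurd (hjv ▸ hRjk) hR⟩
      · exact absurd hadj (by have : j = k := Fin.ext (by omega); rw [this]; simp)
  · -- C2
    intro L hL hLclique hLcard μ hμ
    by_cases hvL : v ∈ L
    · set L' : Finset (Fin n) := L.erase v with hL'
      have hL'lt : ∀ x ∈ L', (x : ℕ) < i := by
        intro x hx
        obtain ⟨hxv, hxL⟩ := Finset.mem_erase.1 hx
        have := hL x hxL
        have : (x : ℕ) ≠ i := fun h => hxv (Fin.ext (by omega))
        omega
      have hL'K : L' ⊆ K := by
        intro x hx
        obtain ⟨hxv, hxL⟩ := Finset.mem_erase.1 hx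
        refine (hKmem x).2 ⟨?_, ?_⟩
        · have := hL'lt x hx
          rw [Fin.lt_def]; omega
        · exact hLclique (by exact_mod_cast hvL) (by exact_mod_cast hxL)
            (fun h => hxv h.symm)
      have hLins : L = insert v L' := (Finset.insert_erase hvL).symm
      have hL'card : L'.card = L.card - 1 := Finset.card_erase_of_mem hvL
      have hLpos : 1 ≤ L.card := Finset.card_pos.2 ⟨v, hvL⟩
      have hvL' : v ∉ L' := Finset.notMem_erase v L
      have hbi : L.biUnion γ' = P ∪ L'.biUnion γ := by
        rw [hLins, Finset.biUnion_insert, hγ'v]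
        congr 1
        apply Finset.biUnion_congr rfl
        intro x hx
        exact hγ'j x (hL'lt x hx)
      have hL'clique : H.IsClique (L' : Set (Fin n)) :=
        hLclique.subset (by rw [hLins]; exact_mod_cast Finset.subset_insert v L')
      have hL'cardle : L'.card ≤ t := by omega
      by_cases hLB : ∃ b ∈ L', b ∈ B
      · obtain ⟨b, hbL', hbB⟩ := hLB
        have hxbP : xb b ∈ P := hPBx b hbB
        have hxbU : xb b ∈ L'.biUnion γ := Finset.mem_biUnion.2 ⟨b, hbL', hxbγ b hbB⟩
        have hIH := hC2 L' hL'lt hL'clique hL'cardle μ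
          (fun S hS hSpair => hμ S (hS.trans (by rw [hLins]; exact Finset.subset_insert v L')) hSpair)
        have hsd : P \ L'.biUnion γ ⊆ P.erase (xb b) := by
          intro x hx
          obtain ⟨hxP, hxU⟩ := Finset.mem_sdiff.1 hx
          exact Finset.mem_erase.2 ⟨fun h => hxU (h ▸ hxbU), hxP⟩
        have hsdcard : (P \ L'.biUnion γ).card ≤ t - 1 := by
          have := Finset.card_le_card hsd
          rw [Finset.card_erase_of_mem hxbP, hPcard] at this
          exact this
        have hunion : (P ∪ L'.biUnion γ).card = (P \ L'.biUnion γ).card + (L'.biUnion γ).card :=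
          (Finset.card_sdiff_add_card P _).symm
        rw [hbi, hunion]
        have harith : (L'.card + 1) * (t - 1) = L'.card * (t - 1) + (t - 1) := by
          rw [add_one_mul]
        have : L.card * (t-1) = L'.card * (t-1) + (t-1) := by
          rw [← harith]; congr 1; omega
        omega
      · -- L' ⊆ A
        push_neg at hLB
        have hL'A : ∀ x ∈ L', x ∈ A := by
          intro x hx
          have hxK := hL'K hx
          by_cases hR : R v x
          · exact (hmemA x).2 ⟨hxK, hR⟩
          · exact absurd ((hmemB x).2 ⟨hxK, hR⟩) (hLB x hx)
        have hμ1 : 1 ≤ μ := by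
          have := hμ {v} (Finset.singleton_subset_iff.2 hvL)
            (by intro x hx y hy hxy; simp at hx hy; subst hx; subst hy; exact absurd rfl hxy)
          simpa using this
        have hIH := hC2 L' hL'lt hL'clique hL'cardle (μ - 1) ?_
        · have hub : (P ∪ L'.biUnion γ).card ≤ P.card + (L'.biUnion γ).card :=
            Finset.card_union_le _ _
          rw [hbi]
          have harith : L.card * (t-1) = L'.card * (t-1) + (t-1) := by
            rw [← add_one_mul]; congr 1; omega
          omega
        · intro S hS hSpair
          have hvS : v ∉ S := fun h => hvL' (hS h)
          have hins : (insert v S).card ≤ μ := by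
            apply hμ
            · rw [hLins]
              exact Finset.insert_subset_insert v hS
            · intro x hx y hy hxy
              rcases Finset.mem_insert.1 hx with rfl | hx'
              · rcases Finset.mem_insert.1 hy with rfl | hy'
                · exact absurd rfl hxy
                · exact ((hmemA y).1 (hL'A y (hS hy'))).2
              · rcases Finset.mem_insert.1 hy with rfl | hy'
                · exact hRs _ _ ((hmemA x).1 (hL'A x (hS hx'))).2
                · exact hSpair x hx' y hy' hxy
          rw [Finset.card_insert_of_notMem hvS] at hins
          omega
    · -- v ∉ L : unchanged
      have hbi : L.biUnion γ' = L.biUnion γ := by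
        apply Finset.biUnion_congr rfl
        intro x hx
        apply hγ'j
        have := hL x hx
        have : (x : ℕ) ≠ i := fun h => hvL (by rwa [show x = v from Fin.ext (by omega)] at hx)
        omega
      rw [hbi]
      exact hC2 L (fun x hx => by
        have := hL x hx
        have hne : (x : ℕ) ≠ i := fun h => hvL (by rwa [show x = v from Fin.ext (by omega)] at hx)
        omega) hLclique hLcard μ hμ

lemma tfold_key (t ω N : ℕ) (ht2 : 2 ≤ t) (hω2 : 2 ≤ ω) (hωt : ω ≤ t)
    (hN : N = t * t + ω - 1) {n : ℕ} (H : SimpleGraph (Fin n)) (hT : IsTTree t n H)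
    (R : Fin n → Fin n → Prop) (hRs : ∀ x y, R x y → R y x)
    (hRH : ∀ x y, R x y → H.Adj x y)
    (hRfree : ∀ S : Finset (Fin n), (∀ x ∈ S, ∀ y ∈ S, x ≠ y → R x y) → S.card ≤ ω) :
    ∃ γ : Fin n → Finset ℕ,
      (∀ v, γ v ⊆ Finset.Icc 1 N) ∧ (∀ v, (γ v).card = t) ∧
      ∀ u v, R u v → γ u ∩ γ v = ∅ := by
  classical
  have main : ∀ i, i ≤ n → ∃ γ : Fin n → Finset ℕ, TFoldInv t N H R i γ := by
    intro i
    induction i with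
    | zero =>
      intro _
      refine ⟨fun _ => ∅, ?_, ?_, ?_⟩
      · intro j hj; omega
      · intro j k hj hk _; omega
      · intro L hL _ _ μ _
        have h0 : L.biUnion (fun _ => (∅ : Finset ℕ)) = ∅ := by
          ext x; simp
        rw [h0, Finset.card_empty]
        exact Nat.zero_le _
    | succ i ih =>
      intro h
      obtain ⟨γ, hγ⟩ := ih (by omega)
      exact tfold_step t ω N ht2 hω2 hωt hN H hT R hRs hRH hRfree i (by omega) γ hγ
  obtain ⟨γ, h0, h1, _⟩ := main n le_rfl
  exact ⟨γ, fun v => (h0 v v.isLt).1, fun v => (h0 v v.isLt).2,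
    fun u v hR => (h1 u v u.isLt v.isLt (hRH u v hR)).2 hR⟩

/-- If `G` has treewidth at most `t ≥ 1` and its largest clique has at most
`ω` vertices (`2 ≤ ω ≤ t`), then `G` has a proper `t`-fold coloring using the colors
`{1, …, t² + ω - 1}`. -/
theorem t_fold_coloring_of_partial_t_tree (t ω : ℕ) (ht : 1 ≤ t) (hω2 : 2 ≤ ω) (hωt : ω ≤ t)
    {V : Type} [Fintype V] (G : SimpleGraph V)
    (htw : TreewidthAtMost G t) (hclique : G.CliqueFree (ω + 1)) :
    ∃ γ : V → Finset ℕ,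
      (∀ v, γ v ⊆ Finset.Icc 1 (t ^ 2 + ω - 1)) ∧
      (∀ v, (γ v).card = t) ∧
      ∀ u v : V, G.Adj u v → γ u ∩ γ v = ∅ := by
  classical
  obtain ⟨n, H, f, hT, hf, hfadj⟩ := htw
  have ht2 : 2 ≤ t := le_trans hω2 hωt
  set R : Fin n → Fin n → Prop := fun x y => ∃ u w, G.Adj u w ∧ f u = x ∧ f w = y with hR
  have hRs : ∀ x y, R x y → R y x := by
    rintro x y ⟨u, w, hadj, hu, hw⟩
    exact ⟨w, u, hadj.symm, hw, hu⟩
  have hRH : ∀ x y, R x y → H.Adj x y := by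
    rintro x y ⟨u, w, hadj, rfl, rfl⟩
    exact hfadj u w hadj
  have hRfree : ∀ S : Finset (Fin n), (∀ x ∈ S, ∀ y ∈ S, x ≠ y → R x y) → S.card ≤ ω := by
    intro S hS
    by_contra hcon
    push_neg at hcon
    obtain ⟨S', hS'sub, hS'card⟩ := Finset.exists_subset_card_eq (s := S) (n := ω + 1) (by omega)
    have hS'pair : ∀ x ∈ S', ∀ y ∈ S', x ≠ y → R x y :=
      fun x hx y hy hxy => hS x (hS'sub hx) y (hS'sub hy) hxy
    have hrange : ∀ x ∈ S', x ∈ Set.range f := by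
      intro x hx
      obtain ⟨y, hy, hyx⟩ := Finset.exists_mem_ne (s := S') (by omega) x
      obtain ⟨u, w, _, hu, _⟩ := hS'pair x hx y hy (Ne.symm hyx)
      exact ⟨u, hu⟩
    set T : Finset V := S'.preimage f (hf.injOn) with hTdef
    have hTmem : ∀ u : V, u ∈ T ↔ f u ∈ S' := by
      intro u; simp [hTdef]
    have hTcard : T.card = ω + 1 := by
      rw [hTdef, Finset.card_preimage]
      rw [Finset.filter_true_of_mem hrange]
      exact hS'card
    have : G.IsNClique (ω + 1) T := by
      constructor
      · intro x hx y hy hxy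
        have hfx : f x ∈ S' := (hTmem x).1 (by exact_mod_cast hx)
        have hfy : f y ∈ S' := (hTmem y).1 (by exact_mod_cast hy)
        have hne : f x ≠ f y := fun h => hxy (hf h)
        obtain ⟨u, w, hadj, hu, hw⟩ := hS'pair (f x) hfx (f y) hfy hne
        have : u = x := hf hu
        have : w = y := hf hw
        subst_vars
        exact hadj
      · exact hTcard
    exact hclique T this
  obtain ⟨γ, hγicc, hγcard, hγdis⟩ :=
    tfold_key t ω (t * t + ω - 1) ht2 hω2 hωt rfl H hT R hRs hRH hRfree
  refine ⟨fun v => γ (f v), ?_, fun v => hγcard (f v), ?_⟩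
  · intro v
    have : t ^ 2 + ω - 1 = t * t + ω - 1 := by rw [pow_two]
    rw [this]
    exact hγicc (f v)
  · intro u w hadj
    exact hγdis (f u) (f w) ⟨u, w, hadj, rfl, rfl⟩
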